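/- Fix 1 < c < 23/21, θ > 1, and let τ = X^{1-c-ε} for a small fixed ε > 0. With Θ(α) as in the paper's setup, ∫_{τ ≤ |α| ≤ 1/2} |Θ(α)|³ dα ≪ X^{3-c-ε'}, for some ε' > 0 depending on ε; in particular it suffices to show |Θ(α)| ≪ |α|^{-1/c} for τ ≤ |α| ≤ 1/2. -/

import Mathlib

open Real MeasureTheory

noncomputable def e (t : ℝ) : ℂ := Complex.exp (2 * Real.pi * Complex.I * t)

lemma abs_exp_sub_one (x : ℝ) :
    ‖Complex.exp (x * Complex.I) - 1‖ = 2 * |Real.sin (x / 2)| := by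
  have h1 : ‖Complex.exp (x * Complex.I) - 1‖
      = Real.sqrt ((Real.cos x - 1)^2 + (Real.sin x)^2) := by
    rw [Complex.norm_def, Complex.normSq_apply]
    simp [Complex.exp_ofReal_mul_I_re, Complex.exp_ofReal_mul_I_im]
    ring_nf
  have h2 : (Real.cos x - 1)^2 + (Real.sin x)^2 = (2 * Real.sin (x/2))^2 := by
    have hs := Real.sin_sq_eq_half_sub (x/2)
    rw [show 2 * (x/2) = x by ring] at hs
    have hp := Real.sin_sq_add_cos_sq x
    nlinarith
  rw [h1, h2, Real.sqrt_sq_eq_abs, abs_mul]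
  norm_num

lemma geom_bound (α : ℝ) (hα : 0 < |α|) (hα2 : |α| ≤ 1/2) (a : ℤ) (k : ℕ) :
    ‖∑ i ∈ Finset.range k, Complex.exp (2*π*Complex.I*α) ^ ((a + 1 + i : ℤ))‖ ≤ 1 / (2*|α|) := by
  set z : ℂ := Complex.exp (2*π*Complex.I*α) with hz
  have hzne : z ≠ 0 := Complex.exp_ne_zero _
  have habs : ‖z‖ = 1 := by
    rw [hz, Complex.norm_exp]
    norm_num
  have hd : ‖z - 1‖ = 2 * |Real.sin (π * α)| := by
    have : z = Complex.exp ((2*π*α : ℝ) * Complex.I) := by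
      rw [hz]; push_cast; ring_nf
    rw [this, abs_exp_sub_one]
    norm_num [mul_div_assoc]
    ring_nf
  have hsin : 2 * |α| ≤ |Real.sin (π * α)| := by
    have h1 : |π * α| ≤ π / 2 := by
      rw [abs_mul, abs_of_pos pi_pos]
      nlinarith [pi_pos]
    have hle := Real.mul_abs_le_abs_sin h1
    rw [abs_mul, abs_of_pos pi_pos] at hle
    have hπ : (2 / π) * (π * |α|) = 2 * |α| := by
      field_simp
    linarith [hle, hπ.symm.le]
  have hlow : 4 * |α| ≤ ‖z - 1‖ := by rw [hd]; linarith
  have hzne1 : z ≠ 1 := by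
    intro h
    rw [h] at hlow
    simp at hlow
    linarith
  have hsum : ∑ i ∈ Finset.range k, z ^ ((a + 1 + i : ℤ))
      = z ^ (a+1) * ((z ^ k - 1) / (z - 1)) := by
    rw [← geom_sum_eq hzne1, Finset.mul_sum]
    refine Finset.sum_congr rfl fun i _ => ?_
    rw [zpow_add₀ hzne, zpow_natCast]
  rw [hsum]
  have h1 : ‖z ^ (a+1)‖ = 1 := by
    rw [norm_zpow]
    rw [habs, one_zpow]
  rw [norm_mul, h1, one_mul, norm_div]
  have h2 : ‖z ^ k - 1‖ ≤ 2 := by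
    calc ‖z ^ k - 1‖ ≤ ‖z ^ k‖ + ‖(1:ℂ)‖ := norm_sub_le _ _
    _ ≤ 2 := by
      rw [norm_pow, habs]
      norm_num
  rw [div_le_div_iff₀ (by linarith) (by positivity)]
  calc ‖z ^ k - 1‖ * (2 * |α|) ≤ 2 * (2 * |α|) := by
        apply mul_le_mul_of_nonneg_right h2; positivity
    _ = 4 * |α| := by ring
    _ ≤ ‖z - 1‖ := hlow
    _ = 1 * ‖z - 1‖ := (one_mul _).symm

lemma abel_bound (n : ℕ) (hn : 0 < n) (w : ℕ → ℝ) (z : ℕ → ℂ) (M : ℝ)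
    (hpos : ∀ i < n, 0 ≤ w i) (hmono : ∀ i, i + 1 < n → w (i+1) ≤ w i)
    (hS : ∀ k ≤ n, ‖∑ i ∈ Finset.range k, z i‖ ≤ M) :
    ‖∑ i ∈ Finset.range n, (w i : ℂ) * z i‖ ≤ w 0 * M := by
  have hM : 0 ≤ M := by simpa using hS 0 (Nat.zero_le n)
  have hsmul : ∀ i, (w i : ℂ) * z i = w i • z i := by
    intro i; rw [Complex.real_smul]
  simp_rw [hsmul]
  rw [Finset.sum_range_by_parts]
  have key : ‖∑ i ∈ Finset.range (n-1), (w (i+1) - w i) • (∑ j ∈ Finset.range (i+1), z j)‖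
      ≤ (w 0 - w (n-1)) * M := by
    have step1 : ‖∑ i ∈ Finset.range (n-1), (w (i+1) - w i) • (∑ j ∈ Finset.range (i+1), z j)‖
        ≤ ∑ i ∈ Finset.range (n-1), (w i - w (i+1)) * M := by
      refine (norm_sum_le _ _).trans (Finset.sum_le_sum fun i hi => ?_)
      rw [Finset.mem_range] at hi
      have hi' : i + 1 < n := by omega
      have hw := hmono i hi'
      rw [norm_smul, Real.norm_eq_abs, abs_of_nonpos (by linarith)]
      have h := hS (i+1) (by omega)
      nlinarith [norm_nonneg (∑ j ∈ Finset.range (i+1), z j)]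
    have step2 : ∑ i ∈ Finset.range (n-1), (w i - w (i+1)) * M = (w 0 - w (n-1)) * M := by
      rw [← Finset.sum_mul, Finset.sum_range_sub' w (n-1)]
    linarith
  have h1 : ‖w (n-1) • ∑ i ∈ Finset.range n, z i‖ ≤ w (n-1) * M := by
    rw [norm_smul, Real.norm_eq_abs, abs_of_nonneg (hpos (n-1) (by omega))]
    exact mul_le_mul_of_nonneg_left (hS n le_rfl) (hpos (n-1) (by omega))
  refine (norm_sub_le _ _).trans ?_
  have := add_le_add h1 key
  linarith [this]

lemma sum_Ioc_eq_range (a b : ℤ) (F : ℤ → ℂ) :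
    ∑ m ∈ Finset.Ioc a b, F m = ∑ i ∈ Finset.range (b - a).toNat, F (a + 1 + i) := by
  refine Finset.sum_nbij' (i := fun m => (m - (a+1)).toNat) (j := fun i => a + 1 + (i : ℤ))
    ?_ ?_ ?_ ?_ ?_
  · intro m hm
    rw [Finset.mem_Ioc] at hm
    simp only [Finset.mem_range]
    omega
  · intro i hi
    simp only [Finset.mem_range] at hi
    simp only [Finset.mem_Ioc]
    omega
  · intro m hm
    rw [Finset.mem_Ioc] at hm
    omega
  · intro i hi
    simp only [Finset.mem_range] at hi
    omega
  · intro m hm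
    rw [Finset.mem_Ioc] at hm
    congr 1
    omega

lemma tan_eq_sub (k : ℤ) (u : ℝ) : Real.tan (u - k * π) = Real.tan u :=
  Real.tan_periodic.sub_int_mul_eq k

lemma interval_facts (k : ℤ) (u : ℝ) (h1 : π * k + Real.arctan 1 ≤ u)
    (h2 : u ≤ π * k + Real.arctan 2) :
    (1 ≤ Real.tan u) ∧ (Real.tan u ≤ 2) ∧ (Real.cos u ≠ 0) ∧
    (∀ u', u ≤ u' → u' ≤ π * k + Real.arctan 2 → Real.tan u ≤ Real.tan u') := by
  have ha1 : Real.arctan 1 = π / 4 := Real.arctan_one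
  have ha2 : Real.arctan 2 < π / 2 := Real.arctan_lt_pi_div_two 2
  have hpi : 0 < π := Real.pi_pos
  have key : ∀ x : ℝ, π * k + Real.arctan 1 ≤ x → x ≤ π * k + Real.arctan 2 →
      (x - k * π) ∈ Set.Ioo (-(π/2)) (π/2) ∧ Real.arctan 1 ≤ x - k * π ∧
        x - k * π ≤ Real.arctan 2 := by
    intro x hx1 hx2
    have l1 : Real.arctan 1 ≤ x - k * π := by rw [mul_comm π (k:ℝ)] at hx1; linarith
    have l2 : x - k * π ≤ Real.arctan 2 := by rw [mul_comm π (k:ℝ)] at hx2; linarith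
    refine ⟨⟨?_, lt_of_le_of_lt l2 ha2⟩, l1, l2⟩
    rw [ha1] at l1; linarith
  obtain ⟨hmem, hl1, hl2⟩ := key u h1 h2
  have htanu : Real.tan u = Real.tan (u - k * π) := (tan_eq_sub k u).symm
  have hmono := Real.strictMonoOn_tan.monotoneOn
  have hmem1 : Real.arctan 1 ∈ Set.Ioo (-(π/2)) (π/2) :=
    ⟨Real.neg_pi_div_two_lt_arctan 1, Real.arctan_lt_pi_div_two 1⟩
  have hmem2 : Real.arctan 2 ∈ Set.Ioo (-(π/2)) (π/2) :=
    ⟨Real.neg_pi_div_two_lt_arctan 2, Real.arctan_lt_pi_div_two 2⟩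
  refine ⟨?_, ?_, ?_, ?_⟩
  · calc (1:ℝ) = Real.tan (Real.arctan 1) := (Real.tan_arctan 1).symm
      _ ≤ Real.tan (u - k * π) := hmono hmem1 hmem hl1
      _ = Real.tan u := (htanu).symm
  · calc Real.tan u = Real.tan (u - k * π) := htanu
      _ ≤ Real.tan (Real.arctan 2) := hmono hmem hmem2 hl2
      _ = 2 := Real.tan_arctan 2
  · intro hcos
    rw [Real.cos_eq_zero_iff] at hcos
    obtain ⟨n, hn⟩ := hcos
    have hv1 : Real.arctan 1 ≤ (2 * (n - k : ℤ) + 1) * π / 2 := by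
      push_cast
      rw [hn] at hl1
      linarith
    have hv2 : ((2 * (n - k : ℤ) + 1) : ℝ) * π / 2 ≤ Real.arctan 2 := by
      push_cast
      rw [hn] at hl2
      linarith
    rw [ha1] at hv1
    have hgt : (0:ℝ) < 2 * ((n - k : ℤ) : ℝ) + 1 := by nlinarith
    have hlt : 2 * ((n - k : ℤ) : ℝ) + 1 < 1 := by nlinarith
    have hgt' : (0:ℤ) < 2 * (n - k) + 1 := by exact_mod_cast hgt
    have hlt' : (2:ℤ) * (n - k) + 1 < 1 := by exact_mod_cast hlt
    omega
  · intro u' hu' hu'2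
    obtain ⟨hmem', hl1', hl2'⟩ := key u' (le_trans h1 hu') hu'2
    rw [htanu, ← tan_eq_sub k u']
    exact hmono hmem hmem' (by linarith)
set_option maxHeartbeats 2000000 in
theorem Theta_cube_tail (c θ ε : ℝ) (hc : 1 < c) (hc' : c < 23 / 21) (hθ : 1 < θ)
    (hε : 0 < ε) (hε' : ε < 1 / 100) :
    ∃ ε' : ℝ, 0 < ε' ∧
      ∃ C X₀ : ℝ, 0 < C ∧
        ∀ X : ℝ, X₀ ≤ X →
          let Δ₁ := Real.exp (Real.pi * (⌊Real.log X / Real.pi⌋ : ℝ) + Real.arctan 1)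
          let Δ₂ := Real.exp (Real.pi * (⌊Real.log X / Real.pi⌋ : ℝ) + Real.arctan 2)
          let N₁ := Δ₁ ^ c
          let N := 2 ^ θ * Δ₂ ^ c
          let τ := X ^ (1 - c - ε)
          ∀ y : ℝ → ℝ,
            (∀ t ∈ Set.Icc N₁ N,
              y t ∈ Set.Icc Δ₁ Δ₂ ∧ (y t) ^ c * Real.tan (Real.log (y t)) ^ θ = t) →
            let w : ℤ → ℝ := fun m =>
              (y m) ^ (1 - c) /
                ((c * Real.tan (Real.log (y m)) + θ * ((Real.cos (Real.log (y m)))⁻¹) ^ 2) *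
                  Real.tan (Real.log (y m)) ^ (θ - 1))
            let Θ : ℝ → ℂ := fun α =>
              ∑ m ∈ Finset.Ioc ⌊N₁⌋ ⌊N⌋, (w m : ℂ) * e ((m : ℝ) * α)
            (∫ α in {α : ℝ | τ ≤ |α| ∧ |α| ≤ 1 / 2}, ‖Θ α‖ ^ 3) ≤
              C * X ^ (3 - c - ε') := by
  refine ⟨1, one_pos, Real.exp (3*π), 1, Real.exp_pos _, ?_⟩
  intro X hX
  intro Δ₁ Δ₂ N₁ N τ y hy w Θ
  have hX1 : (1:ℝ) ≤ X := hX
  have hXpos : (0:ℝ) < X := lt_of_lt_of_le one_pos hX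
  set k : ℤ := ⌊Real.log X / π⌋ with hk
  have hΔ₁def : Δ₁ = Real.exp (π * (k:ℝ) + Real.arctan 1) := rfl
  have hΔ₂def : Δ₂ = Real.exp (π * (k:ℝ) + Real.arctan 2) := rfl
  have hΔ₁pos : 0 < Δ₁ := by rw [hΔ₁def]; exact Real.exp_pos _
  have hτpos : 0 < τ := Real.rpow_pos_of_pos hXpos _
  have hwdef : ∀ m : ℤ, w m = (y m) ^ (1 - c) /
      ((c * Real.tan (Real.log (y m)) + θ * ((Real.cos (Real.log (y m)))⁻¹) ^ 2) *
        Real.tan (Real.log (y m)) ^ (θ - 1)) := fun m => rfl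
  have hΘdef : ∀ α : ℝ, Θ α = ∑ m ∈ Finset.Ioc ⌊N₁⌋ ⌊N⌋, (w m : ℂ) * e ((m : ℝ) * α) :=
    fun α => rfl
  have hΔlow : X * Real.exp (-π) ≤ Δ₁ := by
    rw [hΔ₁def, show X * Real.exp (-π) = Real.exp (Real.log X - π) by
      rw [Real.exp_sub, Real.exp_log hXpos, Real.exp_neg]; ring]
    apply Real.exp_le_exp.mpr
    have h1 : Real.log X / π - 1 < (k:ℝ) := by
      rw [hk]; exact_mod_cast Int.sub_one_lt_floor _
    have h2 : 0 ≤ Real.arctan 1 := by rw [Real.arctan_one]; positivity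
    have hd : π * (Real.log X / π) = Real.log X := by field_simp
    have h4 := mul_lt_mul_of_pos_left h1 Real.pi_pos
    rw [mul_sub, mul_one, hd] at h4
    linarith
  -- membership facts
  have hIoc : ∀ m : ℤ, m ∈ Finset.Ioc ⌊N₁⌋ ⌊N⌋ → (m:ℝ) ∈ Set.Icc N₁ N := by
    intro m hm
    rw [Finset.mem_Ioc] at hm
    constructor
    · have h1 : N₁ < (⌊N₁⌋:ℝ) + 1 := Int.lt_floor_add_one N₁
      have h2 : ((⌊N₁⌋:ℤ):ℝ) + 1 ≤ (m:ℝ) := by exact_mod_cast hm.1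
      linarith
    · exact le_trans (by exact_mod_cast hm.2 : (m:ℝ) ≤ ((⌊N⌋:ℤ):ℝ)) (Int.floor_le N)
  have hyfacts : ∀ m : ℤ, m ∈ Finset.Ioc ⌊N₁⌋ ⌊N⌋ →
      Δ₁ ≤ y m ∧ y m ≤ Δ₂ ∧ (y m) ^ c * Real.tan (Real.log (y m)) ^ θ = (m:ℝ) := by
    intro m hm
    obtain ⟨h1, h2⟩ := hy (m:ℝ) (hIoc m hm)
    exact ⟨h1.1, h1.2, h2⟩
  have hupper : ∀ m : ℤ, m ∈ Finset.Ioc ⌊N₁⌋ ⌊N⌋ →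
      π * (k:ℝ) + Real.arctan 1 ≤ Real.log (y m) ∧
        Real.log (y m) ≤ π * (k:ℝ) + Real.arctan 2 := by
    intro m hm
    obtain ⟨h1, h2, _⟩ := hyfacts m hm
    have hypos : 0 < y m := lt_of_lt_of_le hΔ₁pos h1
    constructor
    · rw [← Real.log_exp (π * (k:ℝ) + Real.arctan 1), ← hΔ₁def]
      exact (Real.log_le_log_iff hΔ₁pos hypos).mpr h1
    · rw [← Real.log_exp (π * (k:ℝ) + Real.arctan 2), ← hΔ₂def]
      exact (Real.log_le_log_iff hypos (Real.exp_pos _)).mpr (hΔ₂def ▸ h2)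
  have htf : ∀ m : ℤ, m ∈ Finset.Ioc ⌊N₁⌋ ⌊N⌋ →
      1 ≤ Real.tan (Real.log (y m)) ∧ Real.tan (Real.log (y m)) ≤ 2 ∧
        Real.cos (Real.log (y m)) ≠ 0 := by
    intro m hm
    obtain ⟨hu1, hu2⟩ := hupper m hm
    obtain ⟨a1, a2, a3, _⟩ := interval_facts k _ hu1 hu2
    exact ⟨a1, a2, a3⟩
  have hsec : ∀ m : ℤ, m ∈ Finset.Ioc ⌊N₁⌋ ⌊N⌋ →
      ((Real.cos (Real.log (y m)))⁻¹)^2 = 1 + Real.tan (Real.log (y m))^2 := by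
    intro m hm
    obtain ⟨_, _, hcos⟩ := htf m hm
    rw [inv_pow, ← Real.inv_one_add_tan_sq hcos, inv_inv]
  have hden : ∀ m : ℤ, m ∈ Finset.Ioc ⌊N₁⌋ ⌊N⌋ →
      1 ≤ (c * Real.tan (Real.log (y m)) + θ * ((Real.cos (Real.log (y m)))⁻¹) ^ 2) *
        Real.tan (Real.log (y m)) ^ (θ - 1) := by
    intro m hm
    obtain ⟨ht1, ht2, _⟩ := htf m hm
    rw [hsec m hm]
    have hf1 : 1 ≤ c * Real.tan (Real.log (y m)) + θ * (1 + Real.tan (Real.log (y m))^2) := by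
      nlinarith
    have hf2 : 1 ≤ Real.tan (Real.log (y m)) ^ (θ - 1) := by
      calc (1:ℝ) = (1:ℝ) ^ (θ - 1) := (Real.one_rpow _).symm
        _ ≤ Real.tan (Real.log (y m)) ^ (θ - 1) :=
          Real.rpow_le_rpow zero_le_one ht1 (by linarith)
    nlinarith
  have hw_nonneg : ∀ m : ℤ, m ∈ Finset.Ioc ⌊N₁⌋ ⌊N⌋ → 0 ≤ w m := by
    intro m hm
    rw [hwdef]
    apply div_nonneg
    · exact Real.rpow_nonneg (le_of_lt (lt_of_lt_of_le hΔ₁pos (hyfacts m hm).1)) _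
    · linarith [hden m hm]
  have hw_le : ∀ m : ℤ, m ∈ Finset.Ioc ⌊N₁⌋ ⌊N⌋ → w m ≤ Δ₁ ^ (1 - c) := by
    intro m hm
    rw [hwdef]
    have hnum : (y m) ^ (1 - c) ≤ Δ₁ ^ (1 - c) :=
      Real.rpow_le_rpow_of_nonpos hΔ₁pos (hyfacts m hm).1 (by linarith)
    calc (y m) ^ (1 - c) / _ ≤ (y m) ^ (1 - c) :=
          div_le_self (Real.rpow_nonneg (le_of_lt (lt_of_lt_of_le hΔ₁pos (hyfacts m hm).1)) _)
            (hden m hm)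
      _ ≤ Δ₁ ^ (1 - c) := hnum
  have hymono : ∀ m : ℤ, m ∈ Finset.Ioc ⌊N₁⌋ ⌊N⌋ → ∀ m' : ℤ, m' ∈ Finset.Ioc ⌊N₁⌋ ⌊N⌋ →
      m ≤ m' → y m ≤ y m' := by
    intro m hm m' hm' hle
    by_contra hcon
    push_neg at hcon
    obtain ⟨h1, h2, heq⟩ := hyfacts m hm
    obtain ⟨h1', h2', heq'⟩ := hyfacts m' hm'
    obtain ⟨hu1, hu2⟩ := hupper m hm
    obtain ⟨hu1', hu2'⟩ := hupper m' hm'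
    obtain ⟨ht1', _, _, htmono'⟩ := interval_facts k _ hu1' hu2'
    have hy'pos : 0 < y m' := lt_of_lt_of_le hΔ₁pos h1'
    have hypos : 0 < y m := lt_of_lt_of_le hΔ₁pos h1
    have hlog : Real.log (y m') ≤ Real.log (y m) :=
      (Real.log_le_log_iff hy'pos hypos).mpr hcon.le
    have htle : Real.tan (Real.log (y m')) ≤ Real.tan (Real.log (y m)) :=
      htmono' _ hlog hu2
    have hc1 : (y m')^c < (y m)^c := Real.rpow_lt_rpow (le_of_lt hy'pos) hcon (by linarith)
    have hc2 : Real.tan (Real.log (y m'))^θ ≤ Real.tan (Real.log (y m))^θ :=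
      Real.rpow_le_rpow (by linarith) htle (by linarith)
    have hp1 : 0 < (y m')^c := Real.rpow_pos_of_pos hy'pos c
    have hp2 : 0 < Real.tan (Real.log (y m'))^θ := Real.rpow_pos_of_pos (by linarith) θ
    have hlt : (m':ℝ) < (m:ℝ) := by
      rw [← heq, ← heq']
      nlinarith
    have hle' : (m:ℝ) ≤ (m':ℝ) := by exact_mod_cast hle
    linarith
  have hw_mono : ∀ m : ℤ, m ∈ Finset.Ioc ⌊N₁⌋ ⌊N⌋ → ∀ m' : ℤ, m' ∈ Finset.Ioc ⌊N₁⌋ ⌊N⌋ →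
      m ≤ m' → w m' ≤ w m := by
    intro m hm m' hm' hle
    have hyle := hymono m hm m' hm' hle
    obtain ⟨h1, h2, _⟩ := hyfacts m hm
    obtain ⟨h1', h2', _⟩ := hyfacts m' hm'
    obtain ⟨hu1, hu2⟩ := hupper m hm
    obtain ⟨hu1', hu2'⟩ := hupper m' hm'
    obtain ⟨ht1, ht2, _, htmono⟩ := interval_facts k _ hu1 hu2
    have hypos : 0 < y m := lt_of_lt_of_le hΔ₁pos h1
    have hy'pos : 0 < y m' := lt_of_lt_of_le hΔ₁pos h1'
    have hlog : Real.log (y m) ≤ Real.log (y m') :=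
      (Real.log_le_log_iff hypos hy'pos).mpr hyle
    have htle : Real.tan (Real.log (y m)) ≤ Real.tan (Real.log (y m')) := htmono _ hlog hu2'
    rw [hwdef, hwdef]
    have hnum : (y m') ^ (1 - c) ≤ (y m) ^ (1 - c) :=
      Real.rpow_le_rpow_of_nonpos hypos hyle (by linarith)
    have hd1 := hden m hm
    have hd2 := hden m' hm'
    apply div_le_div₀ (Real.rpow_nonneg (le_of_lt hypos) _) hnum (by linarith)
    rw [hsec m hm, hsec m' hm']
    have hfac1 : c * Real.tan (Real.log (y m)) + θ * (1 + Real.tan (Real.log (y m))^2)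
        ≤ c * Real.tan (Real.log (y m')) + θ * (1 + Real.tan (Real.log (y m'))^2) := by
      have ha : c * Real.tan (Real.log (y m)) ≤ c * Real.tan (Real.log (y m')) :=
        mul_le_mul_of_nonneg_left htle (by linarith)
      have hsq : Real.tan (Real.log (y m))^2 ≤ Real.tan (Real.log (y m'))^2 := by
        nlinarith [ht1, htle]
      have hb : θ * (1 + Real.tan (Real.log (y m))^2) ≤ θ * (1 + Real.tan (Real.log (y m'))^2) :=
        mul_le_mul_of_nonneg_left (by linarith) (by linarith)
      linarith
    have hfac2 : Real.tan (Real.log (y m)) ^ (θ - 1)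
        ≤ Real.tan (Real.log (y m')) ^ (θ - 1) :=
      Real.rpow_le_rpow (by linarith) htle (by linarith)
    have hpos1 : (0:ℝ) < c * Real.tan (Real.log (y m)) + θ * (1 + Real.tan (Real.log (y m))^2) := by
      nlinarith
    have hpos2 : (0:ℝ) < Real.tan (Real.log (y m)) ^ (θ - 1) :=
      Real.rpow_pos_of_pos (by linarith) _
    exact mul_le_mul hfac1 hfac2 (le_of_lt hpos2) (by linarith)
  -- pointwise bound
  have hpoint : ∀ α : ℝ, τ ≤ |α| → |α| ≤ 1/2 → ‖Θ α‖ ≤ Real.exp π * X ^ ε := by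
    intro α hα1 hα2
    have hαpos : 0 < |α| := lt_of_lt_of_le hτpos hα1
    have hB : Δ₁ ^ (1 - c) * (1/(2*|α|)) ≤ Real.exp π * X ^ ε := by
      have s1 : Δ₁ ^ (1 - c) ≤ Real.exp π * X ^ (1 - c) := by
        have e1 : Δ₁ ^ (1 - c) ≤ (X * Real.exp (-π)) ^ (1 - c) :=
          Real.rpow_le_rpow_of_nonpos (by positivity) hΔlow (by linarith)
        have e2 : (X * Real.exp (-π)) ^ (1 - c) = X ^ (1 - c) * Real.exp (-π * (1 - c)) := by
          rw [Real.mul_rpow (le_of_lt hXpos) (le_of_lt (Real.exp_pos _)), Real.exp_mul]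
        have e3 : Real.exp (-π * (1 - c)) ≤ Real.exp π := by
          apply Real.exp_le_exp.mpr
          nlinarith [Real.pi_pos]
        have e4 : 0 ≤ X ^ (1 - c) := Real.rpow_nonneg (le_of_lt hXpos) _
        calc Δ₁ ^ (1 - c) ≤ X ^ (1 - c) * Real.exp (-π * (1 - c)) := by rw [← e2]; exact e1
          _ ≤ X ^ (1 - c) * Real.exp π := mul_le_mul_of_nonneg_left e3 e4
          _ = Real.exp π * X ^ (1 - c) := mul_comm _ _
      have s2 : 1/(2*|α|) ≤ 1/(2*τ) := by
        apply one_div_le_one_div_of_le (by linarith) (by linarith)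
      have s3 : X ^ (1 - c) * (1/(2*τ)) = X ^ ε / 2 := by
        have hXdiv : X ^ (1 - c) = X ^ (1 - c - ε) * X ^ ε := by
          rw [← Real.rpow_add hXpos]; ring_nf
        rw [hXdiv]
        have hτne : X ^ (1 - c - ε) ≠ 0 := ne_of_gt hτpos
        field_simp
        ring
      have hXε : 0 ≤ X ^ ε := Real.rpow_nonneg (le_of_lt hXpos) _
      have hΔnn : 0 ≤ Δ₁ ^ (1 - c) := Real.rpow_nonneg (le_of_lt hΔ₁pos) _
      calc Δ₁ ^ (1 - c) * (1/(2*|α|)) ≤ Δ₁ ^ (1 - c) * (1/(2*τ)) :=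
            mul_le_mul_of_nonneg_left s2 hΔnn
        _ ≤ (Real.exp π * X ^ (1 - c)) * (1/(2*τ)) :=
            mul_le_mul_of_nonneg_right s1 (by positivity)
        _ = Real.exp π * (X ^ (1 - c) * (1/(2*τ))) := by ring
        _ = Real.exp π * (X ^ ε / 2) := by rw [s3]
        _ ≤ Real.exp π * X ^ ε := by
            have := Real.exp_pos π
            nlinarith
    have he : ∀ m : ℤ, (w m : ℂ) * e ((m:ℝ) * α)
        = (w m : ℂ) * Complex.exp (2*π*Complex.I*α) ^ m := by
      intro m
      congr 1
      rw [← Complex.exp_int_mul]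
      show Complex.exp (2 * (π:ℂ) * Complex.I * (((m:ℝ) * α : ℝ) : ℂ))
          = Complex.exp ((m:ℂ) * (2*(π:ℂ)*Complex.I*(α:ℂ)))
      congr 1
      push_cast
      ring
    have hΘα : Θ α = ∑ i ∈ Finset.range ((⌊N⌋ - ⌊N₁⌋).toNat),
        ((w (⌊N₁⌋ + 1 + (i:ℤ)) : ℂ) * Complex.exp (2*π*Complex.I*α) ^ ((⌊N₁⌋ + 1 + (i:ℤ)))) := by
      rw [hΘdef]
      simp_rw [he]
      exact sum_Ioc_eq_range ⌊N₁⌋ ⌊N⌋ (fun m => (w m : ℂ) * Complex.exp (2*π*Complex.I*α) ^ m)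
    set n : ℕ := (⌊N⌋ - ⌊N₁⌋).toNat with hn
    rcases Nat.eq_zero_or_pos n with h0 | hnpos
    · rw [hΘα, h0]
      simp
      positivity
    · have hmem : ∀ i : ℕ, i < n → (⌊N₁⌋ + 1 + (i:ℤ)) ∈ Finset.Ioc ⌊N₁⌋ ⌊N⌋ := by
        intro i hi
        rw [hn] at hi
        rw [Finset.mem_Ioc]
        omega
      have habel := abel_bound n hnpos (fun i => w (⌊N₁⌋ + 1 + (i:ℤ)))
        (fun i => Complex.exp (2*π*Complex.I*α) ^ ((⌊N₁⌋ + 1 + (i:ℤ))))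
        (1/(2*|α|))
        (fun i hi => hw_nonneg _ (hmem i hi))
        (fun i hi => by
          have h1 := hmem i (by omega)
          have h2 := hmem (i+1) hi
          show w (⌊N₁⌋ + 1 + ((i+1:ℕ):ℤ)) ≤ w (⌊N₁⌋ + 1 + ((i:ℕ):ℤ))
          have e2 : (⌊N₁⌋ + 1 + ((i+1:ℕ):ℤ)) = ⌊N₁⌋ + 1 + (i:ℤ) + 1 := by push_cast; ring
          rw [e2] at h2 ⊢
          exact hw_mono _ h1 _ h2 (by omega))
        (fun kk hkk => geom_bound α hαpos hα2 ⌊N₁⌋ kk)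
      rw [hΘα]
      refine le_trans habel ?_
      have h0mem : (⌊N₁⌋ + 1 + ((0:ℕ):ℤ)) ∈ Finset.Ioc ⌊N₁⌋ ⌊N⌋ := hmem 0 hnpos
      have hwle0 := hw_le _ h0mem
      have hwnn0 := hw_nonneg _ h0mem
      refine le_trans ?_ hB
      apply mul_le_mul_of_nonneg_right hwle0 (by positivity)
  -- the integral bound
  have hSm : MeasurableSet {α : ℝ | τ ≤ |α| ∧ |α| ≤ 1/2} := by
    have : {α : ℝ | τ ≤ |α| ∧ |α| ≤ 1/2}
        = {α : ℝ | τ ≤ |α|} ∩ {α : ℝ | |α| ≤ 1/2} := rfl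
    rw [this]
    exact ((isClosed_le continuous_const continuous_abs).inter
      (isClosed_le continuous_abs continuous_const)).measurableSet
  have hSsub : {α : ℝ | τ ≤ |α| ∧ |α| ≤ 1/2} ⊆ Set.Icc (-(1/2):ℝ) (1/2) := by
    intro α hα
    obtain ⟨h1, h2⟩ := abs_le.mp hα.2
    exact ⟨h1, h2⟩
  have hvol : volume {α : ℝ | τ ≤ |α| ∧ |α| ≤ 1/2} ≤ 1 := by
    calc volume {α : ℝ | τ ≤ |α| ∧ |α| ≤ 1/2} ≤ volume (Set.Icc (-(1/2):ℝ) (1/2)) :=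
          measure_mono hSsub
      _ = 1 := by rw [Real.volume_Icc]; norm_num
  have hfin : volume {α : ℝ | τ ≤ |α| ∧ |α| ≤ 1/2} < ⊤ :=
    lt_of_le_of_lt hvol ENNReal.one_lt_top
  have hint : ‖∫ α in {α : ℝ | τ ≤ |α| ∧ |α| ≤ 1/2}, ‖Θ α‖ ^ 3‖
      ≤ (Real.exp π * X ^ ε)^3 * (volume {α : ℝ | τ ≤ |α| ∧ |α| ≤ 1/2}).toReal := by
    apply norm_setIntegral_le_of_norm_le_const hfin
    intro α hα
    rw [Real.norm_eq_abs, abs_of_nonneg (by positivity)]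
    exact pow_le_pow_left₀ (norm_nonneg _) (hpoint α hα.1 hα.2) 3
  have htoReal : (volume {α : ℝ | τ ≤ |α| ∧ |α| ≤ 1/2}).toReal ≤ 1 := by
    have := ENNReal.toReal_mono ENNReal.one_ne_top hvol
    simpa using this
  have hXε : 0 ≤ X ^ ε := Real.rpow_nonneg (le_of_lt hXpos) _
  have hpow : (Real.exp π * X ^ ε)^3 = Real.exp (3*π) * X ^ (3*ε) := by
    rw [mul_pow, ← Real.exp_nat_mul, ← Real.rpow_natCast (X ^ ε) 3, ← Real.rpow_mul (le_of_lt hXpos)]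
    norm_num
    ring_nf
  have hfinal : Real.exp (3*π) * X ^ (3*ε) ≤ Real.exp (3*π) * X ^ (3 - c - 1) := by
    apply mul_le_mul_of_nonneg_left _ (le_of_lt (Real.exp_pos _))
    apply Real.rpow_le_rpow_of_exponent_le hX1
    nlinarith
  calc (∫ α in {α : ℝ | τ ≤ |α| ∧ |α| ≤ 1/2}, ‖Θ α‖ ^ 3)
      ≤ ‖∫ α in {α : ℝ | τ ≤ |α| ∧ |α| ≤ 1/2}, ‖Θ α‖ ^ 3‖ := le_abs_self _
    _ ≤ (Real.exp π * X ^ ε)^3 * (volume {α : ℝ | τ ≤ |α| ∧ |α| ≤ 1/2}).toReal := hint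
    _ ≤ (Real.exp π * X ^ ε)^3 * 1 := by
        apply mul_le_mul_of_nonneg_left htoReal (by positivity)
    _ = Real.exp (3*π) * X ^ (3*ε) := by rw [mul_one, hpow]
    _ ≤ Real.exp (3*π) * X ^ (3 - c - 1) := hfinal
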